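/- Let (φ_i)_{i≥0} be elements of the dual of a Banach space satisfying ‖Σ_{i=0}^∞ β_i φ_i‖ = Σ_{i=0}^∞ |β_i| for every absolutely summable real sequence (β_i). Then the shift map T defined on C = { Σ_{i=0}^∞ α_i φ_i : α_i ≥ 0, Σ α_i = 1 } by T(Σ α_i φ_i) = Σ α_i φ_{i+1} is well defined, maps C to C, is an isometry (distance preserving), and has no fixed point in C. -/

import Mathlib

open NormedSpace Set

variable {A : Type*} [NormedAddCommGroup A] [NormedSpace ℝ A]

/-- The set `C = { Σ α_i φ_i : α_i ≥ 0, Σ α_i = 1 }` of infinite convex combinations. -/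
def simplexCombinations (φ : ℕ → StrongDual ℝ A) : Set (StrongDual ℝ A) :=
  {f | ∃ α : ℕ → ℝ, (∀ i, 0 ≤ α i) ∧ Summable α ∧ (∑' i, α i) = 1 ∧ f = ∑' i, α i • φ i}

/-- shifted coefficients -/
noncomputable def shiftCoef (α : ℕ → ℝ) : ℕ → ℝ := fun n => Nat.casesOn n 0 α

lemma shiftCoef_summable {α : ℕ → ℝ} (h : Summable α) : Summable (shiftCoef α) := by
  rw [← summable_nat_add_iff 1]
  exact h

lemma shiftCoef_tsum {α : ℕ → ℝ} (h : Summable α) : ∑' n, shiftCoef α n = ∑' n, α n := by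
  rw [Summable.tsum_eq_zero_add (shiftCoef_summable h)]
  simp [shiftCoef]

section

variable (φ : ℕ → StrongDual ℝ A)
variable (hiso : ∀ β : ℕ → ℝ, Summable (fun i => |β i|) →
      ‖∑' i, β i • φ i‖ = ∑' i, |β i|)

include hiso

lemma norm_phi (i : ℕ) : ‖φ i‖ = 1 := by
  have h1 : Summable (fun j => |Pi.single (M := fun _ : ℕ => ℝ) i 1 j|) := by
    apply summable_of_finite_support
    apply Set.Finite.subset (Set.finite_singleton i)
    intro j hj
    simp only [Function.mem_support] at hj
    by_contra hji
    simp [Pi.single_eq_of_ne hji] at hj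
  have := hiso (Pi.single i 1) h1
  rw [tsum_eq_single i (by intro j hj; simp [Pi.single_eq_of_ne hj]),
      tsum_eq_single i (by intro j hj; simp [Pi.single_eq_of_ne hj])] at this
  simpa using this

lemma summable_smul_phi {α : ℕ → ℝ} (h : Summable α) : Summable (fun i => α i • φ i) := by
  apply Summable.of_norm_bounded (summable_abs_iff.mpr h)
  intro i
  rw [norm_smul, norm_phi φ hiso, Real.norm_eq_abs, mul_one]

lemma coef_zero {β : ℕ → ℝ} (hβ : Summable β) (h : ∑' i, β i • φ i = 0) : β = 0 := by
  have habs : Summable (fun i => |β i|) := summable_abs_iff.mpr hβ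
  have := hiso β habs
  rw [h, norm_zero] at this
  funext i
  have h1 : |β i| ≤ 0 := this ▸ Summable.le_tsum habs i (fun j _ => abs_nonneg _)
  simpa using abs_eq_zero.mp (le_antisymm h1 (abs_nonneg _))

lemma coef_unique {α α' : ℕ → ℝ} (hα : Summable α) (hα' : Summable α')
    (h : ∑' i, α i • φ i = ∑' i, α' i • φ i) : α = α' := by
  have key : ∑' i, (α i - α' i) • φ i = 0 := by
    have : (fun i => (α i - α' i) • φ i) = fun i => α i • φ i - α' i • φ i := by
      funext i; exact sub_smul (α i) (α' i) (φ i)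
    rw [this, Summable.tsum_sub (summable_smul_phi φ hiso hα) (summable_smul_phi φ hiso hα'), h, sub_self]
  have := coef_zero φ hiso (hα.sub hα') key
  funext i
  have := congrFun this i
  simpa [sub_eq_zero] using this

lemma shift_sum_eq {α : ℕ → ℝ} (h : Summable α) :
    ∑' i, α i • φ (i + 1) = ∑' i, shiftCoef α i • φ i := by
  rw [Summable.tsum_eq_zero_add (summable_smul_phi φ hiso (shiftCoef_summable h))]
  simp [shiftCoef]

end

/-- Given functionals `(φ_i)` in the dual of a Banach space spanning `ℓ¹` isometrically, the
shift map `T (Σ α_i φ_i) = Σ α_i φ_{i+1}` on the set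
`C = { Σ α_i φ_i : α_i ≥ 0, Σ α_i = 1 }` is well defined, maps `C` into `C`, is distance
preserving on `C`, and has no fixed point in `C`. -/
theorem shift_map_isometry_no_fixed_point
    (A : Type*) [NormedAddCommGroup A] [NormedSpace ℝ A] [CompleteSpace A]
    (φ : ℕ → StrongDual ℝ A)
    (hiso : ∀ β : ℕ → ℝ, Summable (fun i => |β i|) →
      ‖∑' i, β i • φ i‖ = ∑' i, |β i|) :
    ∃ T : StrongDual ℝ A → StrongDual ℝ A,
      (∀ α : ℕ → ℝ, (∀ i, 0 ≤ α i) → Summable α → (∑' i, α i) = 1 →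
        T (∑' i, α i • φ i) = ∑' i, α i • φ (i + 1)) ∧
      MapsTo T (simplexCombinations φ) (simplexCombinations φ) ∧
      (∀ f ∈ simplexCombinations φ, ∀ g ∈ simplexCombinations φ, ‖T f - T g‖ = ‖f - g‖) ∧
      ∀ f ∈ simplexCombinations φ, T f ≠ f := by
  classical
  -- the map
  set T : StrongDual ℝ A → StrongDual ℝ A := fun f =>
    if h : f ∈ simplexCombinations φ then ∑' i, h.choose i • φ (i + 1) else 0 with hT
  -- well-definedness
  have hwd : ∀ α : ℕ → ℝ, (∀ i, 0 ≤ α i) → Summable α → (∑' i, α i) = 1 →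
      T (∑' i, α i • φ i) = ∑' i, α i • φ (i + 1) := by
    intro α hpos hsum h1
    have hmem : (∑' i, α i • φ i) ∈ simplexCombinations φ := ⟨α, hpos, hsum, h1, rfl⟩
    rw [hT]
    simp only [dif_pos hmem]
    obtain ⟨hpos', hsum', h1', heq'⟩ := hmem.choose_spec
    have := coef_unique φ hiso hsum' hsum heq'.symm
    rw [this]
  -- representing T f for f in C
  have hrep : ∀ f ∈ simplexCombinations φ, ∀ α : ℕ → ℝ, (∀ i, 0 ≤ α i) → Summable α →
      (∑' i, α i) = 1 → f = ∑' i, α i • φ i → T f = ∑' i, α i • φ (i + 1) := by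
    intro f hf α hpos hsum h1 heq
    rw [heq]; exact hwd α hpos hsum h1
  refine ⟨T, hwd, ?_, ?_, ?_⟩
  · -- MapsTo
    rintro f ⟨α, hpos, hsum, h1, heq⟩
    rw [hrep f ⟨α, hpos, hsum, h1, heq⟩ α hpos hsum h1 heq]
    refine ⟨shiftCoef α, ?_, shiftCoef_summable hsum, ?_, ?_⟩
    · intro i; cases i with
      | zero => exact le_refl 0
      | succ k => exact hpos k
    · rw [shiftCoef_tsum hsum, h1]
    · exact shift_sum_eq φ hiso hsum
  · -- isometry
    rintro f ⟨α, hpos, hsum, h1, heq⟩ g ⟨α', hpos', hsum', h1', heq'⟩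
    rw [hrep f ⟨α, hpos, hsum, h1, heq⟩ α hpos hsum h1 heq,
        hrep g ⟨α', hpos', hsum', h1', heq'⟩ α' hpos' hsum' h1' heq',
        shift_sum_eq φ hiso hsum, shift_sum_eq φ hiso hsum', heq, heq']
    have hd : ∀ (β β' : ℕ → ℝ), Summable β → Summable β' →
        ∑' i, β i • φ i - ∑' i, β' i • φ i = ∑' i, (β i - β' i) • φ i := by
      intro β β' hβ hβ'
      rw [← Summable.tsum_sub (summable_smul_phi φ hiso hβ) (summable_smul_phi φ hiso hβ')]
      congr 1; funext i; exact (sub_smul _ _ _).symm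
    rw [hd _ _ (shiftCoef_summable hsum) (shiftCoef_summable hsum'), hd _ _ hsum hsum',
        hiso _ (summable_abs_iff.mpr ((shiftCoef_summable hsum).sub (shiftCoef_summable hsum'))),
        hiso _ (summable_abs_iff.mpr (hsum.sub hsum'))]
    rw [Summable.tsum_eq_zero_add (summable_abs_iff.mpr ((shiftCoef_summable hsum).sub (shiftCoef_summable hsum')))]
    simp [shiftCoef]
  · -- no fixed point
    rintro f ⟨α, hpos, hsum, h1, heq⟩ hfix
    rw [hrep f ⟨α, hpos, hsum, h1, heq⟩ α hpos hsum h1 heq, shift_sum_eq φ hiso hsum, heq] at hfix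
    have := coef_unique φ hiso (shiftCoef_summable hsum) hsum hfix
    have hall : ∀ i, α i = 0 := by
      have h0 : α 0 = 0 := by
        have := congrFun this 0; simpa [shiftCoef] using this.symm
      intro i
      induction i with
      | zero => exact h0
      | succ k ih =>
        have := congrFun this (k + 1)
        simp only [shiftCoef] at this
        rw [← this, ih]
    simp [hall] at h1
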